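/- Let k be a commutative ring and p a prime. Let ρ : k[ξ,η] → k[x,y] be the k-algebra homomorphism with ρ(ξ) = x^p and ρ(η) = y^p. Let M be an ideal of k[ξ,η] and let N be the ideal of k[x,y] generated by the image ρ(M). If for some n ≥ 0 the class of ξ^n is nonzero in k[ξ,η]/M (i.e. ξ^n ∉ M), then the class of x^{pn+p−1} is nonzero in k[x,y]/N (i.e. x^{pn+p−1} ∉ N). -/

import Mathlib

open MvPolynomial

section Aux

variable {k : Type*} [CommRing k]

/-- The exponent-shifting map: `e ↦ (p*e₀ + (p-1), p*e₁)`. -/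
noncomputable def sigExp (p : ℕ) (d : Fin 2 →₀ ℕ) : Fin 2 →₀ ℕ :=
  Finsupp.single 0 (p * d 0 + (p - 1)) + Finsupp.single 1 (p * d 1)

lemma sigExp_apply0 (p : ℕ) (d : Fin 2 →₀ ℕ) : sigExp p d 0 = p * d 0 + (p - 1) := by
  simp [sigExp, Finsupp.single_apply]

lemma sigExp_apply1 (p : ℕ) (d : Fin 2 →₀ ℕ) : sigExp p d 1 = p * d 1 := by
  simp [sigExp, Finsupp.single_apply]

lemma sigExp_inj {p : ℕ} (hp : 0 < p) : Function.Injective (sigExp p) := by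
  intro a b h
  have h0 : sigExp p a 0 = sigExp p b 0 := by rw [h]
  have h1 : sigExp p a 1 = sigExp p b 1 := by rw [h]
  rw [sigExp_apply0, sigExp_apply0] at h0
  rw [sigExp_apply1, sigExp_apply1] at h1
  have e0 : a 0 = b 0 := Nat.eq_of_mul_eq_mul_left hp (by omega)
  have e1 : a 1 = b 1 := Nat.eq_of_mul_eq_mul_left hp h1
  ext j
  fin_cases j <;> simp only [Fin.zero_eta, Fin.mk_one]
  · exact e0
  · exact e1

/-- The "extraction" operator: coefficient of `ξ^a η^b` in `Tm p g`
is the coefficient of `x^(pa+p-1) y^(pb)` in `g`. -/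
noncomputable def Tm (p : ℕ) (hp : 0 < p) (g : MvPolynomial (Fin 2) k) :
    MvPolynomial (Fin 2) k :=
  AddMonoidAlgebra.ofCoeff (Finsupp.comapDomain (sigExp p) (AddMonoidAlgebra.coeff g) (sigExp_inj hp).injOn)

lemma coeff_Tm (p : ℕ) (hp : 0 < p) (g : MvPolynomial (Fin 2) k) (e : Fin 2 →₀ ℕ) :
    coeff e (Tm p hp g) = coeff (sigExp p e) g := rfl

lemma Tm_add (p : ℕ) (hp : 0 < p) (g h : MvPolynomial (Fin 2) k) :
    Tm p hp (g + h) = Tm p hp g + Tm p hp h := by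
  apply MvPolynomial.ext
  intro e
  simp [coeff_Tm, coeff_add]

lemma Tm_C_mul (p : ℕ) (hp : 0 < p) (a : k) (g : MvPolynomial (Fin 2) k) :
    Tm p hp (C a * g) = C a * Tm p hp g := by
  apply MvPolynomial.ext
  intro e
  simp [coeff_Tm, coeff_C_mul]

lemma Tm_mul_X_pow (p : ℕ) (hp : 0 < p) (i : Fin 2) (g : MvPolynomial (Fin 2) k) :
    Tm p hp (g * X i ^ p) = X i * Tm p hp g := by
  classical
  apply MvPolynomial.ext
  intro e
  rw [coeff_Tm, X_pow_eq_monomial, coeff_mul_monomial', coeff_X_mul']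
  fin_cases i <;> simp only [Fin.zero_eta, Fin.mk_one]
  · by_cases h : (1 : ℕ) ≤ e 0
    · have hle : Finsupp.single (0 : Fin 2) p ≤ sigExp p e := by
        rw [Finsupp.single_le_iff, sigExp_apply0]
        have : 1 ≤ p * e 0 := Nat.one_le_iff_ne_zero.mpr (by positivity)
        omega
      have hmem : (0 : Fin 2) ∈ e.support := by
        rw [Finsupp.mem_support_iff]; omega
      rw [if_pos hle, if_pos hmem, mul_one, coeff_Tm]
      congr 1
      ext j
      rw [Finsupp.tsub_apply]
      fin_cases j <;> simp only [Fin.zero_eta, Fin.mk_one]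
      · rw [sigExp_apply0, sigExp_apply0, Finsupp.single_eq_same, Finsupp.tsub_apply,
          Finsupp.single_eq_same]
        have h1 : p * (e 0 - 1) = p * e 0 - p := by
          rw [Nat.mul_sub, mul_one]
        have h2 : p ≤ p * e 0 := Nat.le_mul_of_pos_right p h
        omega
      · rw [sigExp_apply1, sigExp_apply1, Finsupp.single_eq_of_ne (by decide),
          Finsupp.tsub_apply, Finsupp.single_eq_of_ne (by decide)]
        simp
    · have hle : ¬ Finsupp.single (0 : Fin 2) p ≤ sigExp p e := by
        rw [Finsupp.single_le_iff, sigExp_apply0]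
        have : e 0 = 0 := by omega
        simp [this]
        omega
      have hmem : (0 : Fin 2) ∉ e.support := by
        rw [Finsupp.mem_support_iff]; omega
      rw [if_neg hle, if_neg hmem]
  · by_cases h : (1 : ℕ) ≤ e 1
    · have hle : Finsupp.single (1 : Fin 2) p ≤ sigExp p e := by
        rw [Finsupp.single_le_iff, sigExp_apply1]
        exact Nat.le_mul_of_pos_right p h
      have hmem : (1 : Fin 2) ∈ e.support := by
        rw [Finsupp.mem_support_iff]; omega
      rw [if_pos hle, if_pos hmem, mul_one, coeff_Tm]
      congr 1
      ext j
      rw [Finsupp.tsub_apply]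
      fin_cases j <;> simp only [Fin.zero_eta, Fin.mk_one]
      · rw [sigExp_apply0, sigExp_apply0, Finsupp.single_eq_of_ne (by decide),
          Finsupp.tsub_apply, Finsupp.single_eq_of_ne (by decide)]
        simp
      · rw [sigExp_apply1, sigExp_apply1, Finsupp.single_eq_same, Finsupp.tsub_apply,
          Finsupp.single_eq_same]
        have h1 : p * (e 1 - 1) = p * e 1 - p := by
          rw [Nat.mul_sub, mul_one]
        omega
    · have hle : ¬ Finsupp.single (1 : Fin 2) p ≤ sigExp p e := by
        rw [Finsupp.single_le_iff, sigExp_apply1]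
        have : e 1 = 0 := by omega
        simp [this]
        omega
      have hmem : (1 : Fin 2) ∉ e.support := by
        rw [Finsupp.mem_support_iff]; omega
      rw [if_neg hle, if_neg hmem]

lemma Tm_mul_rho (p : ℕ) (hp : 0 < p)
    (ρ : MvPolynomial (Fin 2) k →ₐ[k] MvPolynomial (Fin 2) k)
    (hρx : ρ (X 0) = X 0 ^ p) (hρy : ρ (X 1) = X 1 ^ p)
    (m : MvPolynomial (Fin 2) k) :
    ∀ g : MvPolynomial (Fin 2) k, Tm p hp (g * ρ m) = m * Tm p hp g := by
  induction m using MvPolynomial.induction_on with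
  | C a =>
      intro g
      have hCa : ρ (C a) = C a := by
        simp [algebraMap_eq]
      rw [hCa, mul_comm, Tm_C_mul]
  | add q r hq hr =>
      intro g
      rw [map_add, mul_add, Tm_add, hq, hr, add_mul]
  | mul_X q i hq =>
      intro g
      have hXi : ρ (X i) = X i ^ p := by
        fin_cases i <;> simp only [Fin.zero_eta, Fin.mk_one]
        · exact hρx
        · exact hρy
      rw [map_mul, hXi, ← mul_assoc, Tm_mul_X_pow, hq, mul_comm q (X i), mul_assoc]

lemma Tm_X_pow (p : ℕ) (hp : 0 < p) (n : ℕ) :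
    Tm p hp ((X 0 : MvPolynomial (Fin 2) k) ^ (p * n + p - 1)) = X 0 ^ n := by
  classical
  apply MvPolynomial.ext
  intro e
  rw [coeff_Tm, X_pow_eq_monomial, X_pow_eq_monomial, coeff_monomial, coeff_monomial]
  have key : Finsupp.single 0 (p * n + p - 1) = sigExp p e ↔ Finsupp.single 0 n = e := by
    constructor
    · intro h
      have h0 : sigExp p e 0 = p * n + p - 1 := by rw [← h, Finsupp.single_eq_same]
      have h1 : sigExp p e 1 = 0 := by rw [← h, Finsupp.single_eq_of_ne (by decide)]
      rw [sigExp_apply0] at h0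
      rw [sigExp_apply1] at h1
      have e0 : e 0 = n := Nat.eq_of_mul_eq_mul_left hp (by omega)
      have e1 : e 1 = 0 := by
        rcases Nat.mul_eq_zero.mp h1 with h' | h'
        · omega
        · exact h'
      ext j
      fin_cases j <;> simp only [Fin.zero_eta, Fin.mk_one]
      · rw [Finsupp.single_eq_same]; exact e0.symm
      · rw [Finsupp.single_eq_of_ne (by decide)]; exact e1.symm
    · intro h
      rw [← h]
      ext j
      fin_cases j <;> simp only [Fin.zero_eta, Fin.mk_one]
      · rw [Finsupp.single_eq_same, sigExp_apply0, Finsupp.single_eq_same]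
        omega
      · rw [Finsupp.single_eq_of_ne (by decide), sigExp_apply1,
          Finsupp.single_eq_of_ne (by decide), Nat.mul_zero]
  by_cases h : Finsupp.single (0 : Fin 2) n = e
  · rw [if_pos (key.mpr h), if_pos h]
  · rw [if_neg (fun hc => h (key.mp hc)), if_neg h]

end Aux

/-- Let `ρ : k[ξ,η] → k[x,y]` be the `k`-algebra homomorphism with `ρ(ξ) = x^p`,
`ρ(η) = y^p`, let `M` be an ideal of `k[ξ,η]` and `N` the ideal of `k[x,y]` generated
by `ρ(M)`. If `ξ^n ∉ M` then `x^{pn+p-1} ∉ N`. -/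
theorem x_pow_not_mem_of_xi_pow_not_mem (k : Type*) [CommRing k] (p : ℕ) (hp : p.Prime)
    (ρ : MvPolynomial (Fin 2) k →ₐ[k] MvPolynomial (Fin 2) k)
    (hρx : ρ (X 0) = X 0 ^ p) (hρy : ρ (X 1) = X 1 ^ p)
    (M : Ideal (MvPolynomial (Fin 2) k))
    (N : Ideal (MvPolynomial (Fin 2) k)) (hN : N = Ideal.map ρ.toRingHom M)
    (n : ℕ) (hξ : (X 0 : MvPolynomial (Fin 2) k) ^ n ∉ M) :
    (X 0 : MvPolynomial (Fin 2) k) ^ (p * n + p - 1) ∉ N := by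
  have hppos : 0 < p := hp.pos
  intro hmem
  apply hξ
  have key : ∀ g ∈ N, ∀ c : MvPolynomial (Fin 2) k, Tm p hppos (c * g) ∈ M := by
    rw [hN, Ideal.map]
    intro g hg
    refine Submodule.span_induction
      (p := fun x _ => ∀ c : MvPolynomial (Fin 2) k, Tm p hppos (c * x) ∈ M)
      ?_ ?_ ?_ ?_ hg
    · rintro x ⟨m, hm, rfl⟩ c
      have : (ρ.toRingHom : MvPolynomial (Fin 2) k → MvPolynomial (Fin 2) k) m = ρ m := rfl
      rw [this, Tm_mul_rho p hppos ρ hρx hρy m c]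
      exact Ideal.mul_mem_right _ M hm
    · intro c
      rw [mul_zero]
      have : Tm p hppos (0 : MvPolynomial (Fin 2) k) = 0 := by
        apply MvPolynomial.ext
        intro e
        simp [coeff_Tm]
      rw [this]
      exact M.zero_mem
    · intro x y _ _ hx hy c
      rw [mul_add, Tm_add]
      exact M.add_mem (hx c) (hy c)
    · intro r x _ hx c
      rw [smul_eq_mul, ← mul_assoc]
      exact hx (c * r)
  have := key _ hmem 1
  rwa [one_mul, Tm_X_pow] at this
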